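/- arXiv:1407.7663 — 3 statements merged into one kernel-verified Lean document; each statement's English description precedes it below -/
import Mathlib

section
/- For any constant δ > 0 and any ε := ε_1 p_0 ∈ (0,1], set γ_0 := ε/(4(1+δ)). Then k-tournament selection with k ≥ 4(1+δ)/ε satisfies: for every population P of size λ sorted by fitness and every γ ∈ (0, γ_0], the probability β(γ,P) that the selected individual is at least as fit as the individual of rank ⌈γλ⌉ satisfies β(γ,P) ≥ 1 − 1/(γk + 1) ≥ γ √((1+δ)/(ε γ_0)); in particular condition (C4) holds with this γ_0. -/
open scoped ENNReal

/-- The product distribution on `Fin n → X`: each coordinate sampled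
independently from `p i`. -/
noncomputable def pmfPi {n : ℕ} {X : Type*} [Fintype X] (p : Fin n → PMF X) :
    PMF (Fin n → X) :=
  PMF.ofFintype (fun f => ∏ i, p i (f i)) (by
    rw [← Fintype.prod_sum]
    exact Finset.prod_eq_one (fun i _ => by
      rw [← tsum_fintype (L := SummationFilter.unconditional _)]; exact (p i).tsum_coe))

/-- The `r`-th largest value (rank `r`, `1`-indexed) of the multiset of values
`g 0, …, g (lam-1)`. -/
noncomputable def rankVal {lam : ℕ} (g : Fin lam → ℝ) (r : ℕ) : ℝ :=
  ((List.ofFn g).insertionSort (· ≥ ·)).getD (r - 1) 0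

/-- `k`-tournament selection: `k` individuals are sampled uniformly at random
with replacement from the population `P` and (an index of) the fittest of
these is returned. -/
noncomputable def tournamentSel {X : Type*} {lam : ℕ} [NeZero lam] (k : ℕ)
    (f : X → ℝ) (P : Fin lam → X) : PMF (Fin lam) :=
  (pmfPi fun _ : Fin k => PMF.uniformOfFintype (Fin lam)).map fun s =>
    ((List.ofFn s).argmax fun i => f (P i)).getD default

/-- Selective pressure `β(γ, P)` of a selection mechanism: the probability of
selecting an individual at least as fit as the individual of rank `⌈γλ⌉`. -/
noncomputable def selPressure {X : Type*} {lam : ℕ} (f : X → ℝ)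
    (psel : (Fin lam → X) → PMF (Fin lam)) (P : Fin lam → X) (γ : ℝ) : ℝ≥0∞ :=
  (psel P).toOuterMeasure {i | rankVal (fun i => f (P i)) ⌈γ * lam⌉₊ ≤ f (P i)}

lemma rank_count {lam : ℕ} (g : Fin lam → ℝ) (r : ℕ) (hr1 : 1 ≤ r) (hrl : r ≤ lam) :
    r ≤ (Finset.univ.filter fun i => rankVal g r ≤ g i).card := by
  classical
  set L := (List.ofFn g).insertionSort (· ≥ ·) with hL
  have hlen : L.length = lam := by
    rw [hL, List.length_insertionSort, List.length_ofFn]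
  set v := rankVal g r with hv
  have hsorted : List.Pairwise (· ≥ ·) L := List.pairwise_insertionSort _ _
  have hr1' : r - 1 < L.length := by omega
  have hvget : v = L.get ⟨r - 1, hr1'⟩ := by
    rw [hv, rankVal, ← hL, List.getD_eq_getElem _ _ hr1']; rfl
  -- countP on L is at least r
  have htake : List.countP (fun x => decide (v ≤ x)) (L.take r) = r := by
    have hlt : (L.take r).length = r := by
      rw [List.length_take]; omega
    rw [List.countP_eq_length.mpr, hlt]
    intro a ha
    obtain ⟨i, hi, hget⟩ := List.mem_iff_getElem.mp ha
    have hi' : i < r := by omega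
    have : L[i]'(by omega) = a := by rw [← hget, List.getElem_take]
    rw [← this]
    simp only [decide_eq_true_eq, hvget]
    exact hsorted.rel_get_of_le (a := ⟨i, by omega⟩) (b := ⟨r-1, hr1'⟩) (by simp; omega)
  have hcountL : r ≤ List.countP (fun x => decide (v ≤ x)) L := by
    rw [← htake]; exact List.Sublist.countP_le (List.take_sublist r L)
  have hperm : List.countP (fun x => decide (v ≤ x)) L
      = List.countP (fun x => decide (v ≤ x)) (List.ofFn g) :=
    (List.perm_insertionSort _ _).countP_eq _
  have hofn : List.countP (fun x => decide (v ≤ x)) (List.ofFn g)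
      = List.countP (fun i => decide (v ≤ g i)) (List.finRange lam) := by
    rw [List.ofFn_eq_map, List.countP_map]; rfl
  have hcard : (Finset.univ.filter fun i => v ≤ g i).card
      = List.countP (fun i => decide (v ≤ g i)) (List.finRange lam) := by
    rw [Fin.univ_def]
    simp [Finset.filter, Finset.card, List.countP_eq_length_filter]
  omega

lemma tournament_prob {X : Type*} {lam : ℕ} [NeZero lam] (k : ℕ) (hk : 1 ≤ k)
    (f : X → ℝ) (P : Fin lam → X) (v : ℝ) :
    1 - (((Finset.univ.filter fun i => ¬ v ≤ f (P i)).card : ℝ≥0∞) * (lam : ℝ≥0∞)⁻¹)^k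
      ≤ (tournamentSel k f P).toOuterMeasure {i | v ≤ f (P i)} := by
  classical
  set p := pmfPi fun _ : Fin k => PMF.uniformOfFintype (Fin lam) with hp
  set Tc := Finset.univ.filter fun i => ¬ v ≤ f (P i) with hTc
  set E : Set (Fin k → Fin lam) := {s | ∃ j, v ≤ f (P (s j))} with hE
  rw [tournamentSel, PMF.toOuterMeasure_map_apply]
  have hsub : E ⊆ (fun s => ((List.ofFn s).argmax fun i => f (P i)).getD default) ⁻¹'
      {i | v ≤ f (P i)} := by
    rintro s ⟨j, hj⟩
    have hne : List.ofFn s ≠ [] := by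
      simp [List.ofFn_eq_map, List.finRange_eq_nil_iff]; omega
    obtain ⟨m, hm⟩ : ∃ m, (List.ofFn s).argmax (fun i => f (P i)) = some m := by
      rcases h : (List.ofFn s).argmax (fun i => f (P i)) with _ | m
      · exact absurd (List.argmax_eq_none.mp h) hne
      · exact ⟨m, rfl⟩
    have hmem : s j ∈ List.ofFn s := by
      rw [List.mem_ofFn]; exact ⟨j, rfl⟩
    have := List.le_of_mem_argmax hmem hm
    simp only [Set.mem_preimage, Set.mem_setOf_eq, hm, Option.getD_some]
    linarith
  -- compute measure of E
  have hpc : ∀ s : Fin k → Fin lam, p s = ∏ _j : Fin k, (lam : ℝ≥0∞)⁻¹ := by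
    intro s
    rw [hp, pmfPi, PMF.ofFintype_apply]
    exact Finset.prod_congr rfl fun j _ => by
      rw [PMF.uniformOfFintype_apply, Fintype.card_fin]
  have hEc : p.toOuterMeasure Eᶜ = ((Tc.card : ℝ≥0∞) * (lam : ℝ≥0∞)⁻¹)^k := by
    rw [PMF.toOuterMeasure_apply, tsum_fintype]
    have h1 : ∀ s : Fin k → Fin lam, Eᶜ.indicator ⇑p s
        = if s ∈ Fintype.piFinset (fun _ : Fin k => Tc) then p s else 0 := by
      intro s
      have : s ∈ Eᶜ ↔ s ∈ Fintype.piFinset (fun _ : Fin k => Tc) := by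
        simp [hE, hTc, Fintype.mem_piFinset]
      rw [Set.indicator_apply]
      by_cases hmem : s ∈ Eᶜ
      · rw [if_pos hmem, if_pos (this.mp hmem)]
      · rw [if_neg hmem, if_neg (fun h => hmem (this.mpr h))]
    rw [Finset.sum_congr rfl fun s _ => h1 s, Finset.sum_ite_mem,
      Finset.univ_inter]
    have := Finset.prod_univ_sum (fun _ : Fin k => Tc)
      (fun (_ : Fin k) (_ : Fin lam) => (lam : ℝ≥0∞)⁻¹)
    rw [Finset.sum_congr rfl fun s _ => hpc s, ← this]
    simp [Finset.sum_const, mul_comm]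
  have htot : p.toOuterMeasure E + p.toOuterMeasure Eᶜ = 1 := by
    rw [PMF.toOuterMeasure_apply, PMF.toOuterMeasure_apply, tsum_fintype, tsum_fintype,
      ← Finset.sum_add_distrib]
    have : ∀ s, E.indicator ⇑p s + Eᶜ.indicator ⇑p s = p s := by
      intro s
      rw [Set.indicator_apply, Set.indicator_apply]
      by_cases h : s ∈ E <;> simp [h]
    rw [Finset.sum_congr rfl fun s _ => this s, ← tsum_fintype (L := SummationFilter.unconditional _)]
    exact p.tsum_coe
  have heq : p.toOuterMeasure E = 1 - p.toOuterMeasure Eᶜ := by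
    refine ENNReal.eq_sub_of_add_eq ?_ htot
    exact ne_top_of_le_ne_top ENNReal.one_ne_top (le_add_self.trans htot.le)
  refine le_trans (le_of_eq ?_) (p.toOuterMeasure_mono (fun s hs => hsub hs.1))
  rw [heq, hEc]

set_option maxHeartbeats 1600000

/-- **Lemma 1(1)**: for any constant `δ > 0` and `ε := ε₁p₀ ∈ (0,1]`, with
`γ₀ := ε/(4(1+δ))`, `k`-tournament selection with `k ≥ 4(1+δ)/ε` satisfies
`β(γ,P) ≥ 1 − 1/(γk + 1) ≥ γ √((1+δ)/(ε γ₀))` for all populations `P` and all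
`γ ∈ (0, γ₀]`; in particular condition (C4) holds with this `γ₀`. -/
theorem tournament_selection_satisfies_C4
    {X : Type*} {lam : ℕ} [NeZero lam] (k : ℕ)
    (f : X → ℝ) (δ ε1 p0 ε γ0 : ℝ)
    (hδ : 0 < δ) (hε : ε = ε1 * p0) (hε0 : 0 < ε) (hεle : ε ≤ 1)
    (hγ0 : γ0 = ε / (4 * (1 + δ)))
    (hk : 4 * (1 + δ) / ε ≤ (k : ℝ)) :
    ∀ (P : Fin lam → X) (γ : ℝ), 0 < γ → γ ≤ γ0 →
      ENNReal.ofReal (1 - 1 / (γ * k + 1)) ≤ selPressure f (tournamentSel k f) P γ ∧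
      γ * Real.sqrt ((1 + δ) / (ε * γ0)) ≤ 1 - 1 / (γ * k + 1) := by
  intro P γ hγ hγle
  have h1δ : (0:ℝ) < 1 + δ := by linarith
  have hγ0pos : 0 < γ0 := by rw [hγ0]; positivity
  have hγ1 : γ < 1 := by
    have : γ0 ≤ 1/4 := by
      rw [hγ0, div_le_div_iff₀ (by positivity) (by norm_num)]; nlinarith
    linarith
  have hk4 : (4:ℝ) ≤ (k:ℝ) := by
    refine le_trans ?_ hk
    rw [le_div_iff₀ hε0]; nlinarith
  have hk1 : 1 ≤ k := by exact_mod_cast le_trans (by norm_num : (1:ℝ) ≤ 4) hk4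
  have hlam : 0 < lam := Nat.pos_of_ne_zero (NeZero.ne lam)
  have hlamR : (0:ℝ) < lam := by exact_mod_cast hlam
  constructor
  · -- probability bound
    set r := ⌈γ * (lam:ℝ)⌉₊ with hr
    have hr1 : 1 ≤ r := Nat.ceil_pos.mpr (by positivity)
    have hrl : r ≤ lam := by
      rw [hr, Nat.ceil_le]; push_cast; nlinarith
    set g : Fin lam → ℝ := fun i => f (P i) with hg
    set v := rankVal g r with hv
    set m := (Finset.univ.filter fun i => v ≤ g i).card with hm
    have hrm : r ≤ m := rank_count g r hr1 hrl
    have hmlam : m ≤ lam := by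
      rw [hm]
      calc (Finset.univ.filter fun i => v ≤ g i).card ≤ Finset.univ.card :=
            Finset.card_filter_le _ _
        _ = lam := by rw [Finset.card_univ, Fintype.card_fin]
    have hTc : (Finset.univ.filter fun i => ¬ v ≤ g i).card = lam - m := by
      rw [Finset.filter_not, Finset.card_sdiff_of_subset (Finset.filter_subset _ _),
        Finset.card_univ, Fintype.card_fin, hm]
    have hmain := tournament_prob k hk1 f P v
    rw [hg] at hTc
    rw [hTc] at hmain
    have hsel : selPressure f (tournamentSel k f) P γ
        = (tournamentSel k f P).toOuterMeasure {i | v ≤ f (P i)} := rfl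
    rw [hsel]
    refine le_trans ?_ hmain
    -- real-number comparison
    have hcast : (((lam - m : ℕ) : ℝ≥0∞) * (lam : ℝ≥0∞)⁻¹)
        = ENNReal.ofReal (((lam - m : ℕ) : ℝ) / lam) := by
      rw [ENNReal.ofReal_div_of_pos hlamR, ENNReal.ofReal_natCast,
        ENNReal.ofReal_natCast, div_eq_mul_inv]
    have hx0 : (0:ℝ) ≤ ((lam - m : ℕ) : ℝ) / lam := by positivity
    have hγm : γ * lam ≤ (m:ℝ) := by
      refine le_trans (Nat.le_ceil _) ?_
      exact_mod_cast hrm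
    have hxle : ((lam - m : ℕ) : ℝ) / lam ≤ 1 - γ := by
      rw [div_le_iff₀ hlamR, Nat.cast_sub hmlam]
      nlinarith
    have hbern : (1-γ)^k ≤ 1/(γ*k+1) := by
      have hber : 1 + (k:ℝ)*γ ≤ (1+γ)^k := one_add_mul_le_pow (by linarith) k
      have h0 : (0:ℝ) ≤ (1-γ)^k := pow_nonneg (by linarith) k
      have h4 : (1-γ)^k * (γ*k+1) ≤ (1-γ)^k * (1+γ)^k :=
        mul_le_mul_of_nonneg_left (by linarith) h0
      have h2 : (1-γ)^k * (1+γ)^k = (1-γ^2)^k := by rw [← mul_pow]; ring_nf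
      have h3 : (1-γ^2)^k ≤ 1 := pow_le_one₀ (by nlinarith) (by nlinarith)
      rw [le_div_iff₀ (by positivity)]
      calc (1-γ)^k * (γ*↑k+1) ≤ (1-γ)^k * (1+γ)^k := h4
        _ = (1-γ^2)^k := h2
        _ ≤ 1 := h3
    calc ENNReal.ofReal (1 - 1 / (γ * k + 1))
        ≤ ENNReal.ofReal (1 - (1-γ)^k) :=
          ENNReal.ofReal_le_ofReal (by linarith)
      _ = 1 - ENNReal.ofReal ((1-γ)^k) := by
          rw [ENNReal.ofReal_sub _ (pow_nonneg (by linarith) k), ENNReal.ofReal_one]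
      _ ≤ 1 - (((lam - m : ℕ) : ℝ≥0∞) * (lam : ℝ≥0∞)⁻¹)^k := by
          refine tsub_le_tsub_left ?_ 1
          rw [hcast, ← ENNReal.ofReal_pow hx0]
          exact ENNReal.ofReal_le_ofReal (pow_le_pow_left₀ hx0 hxle k)
  · -- algebraic bound
    have hsq : Real.sqrt ((1+δ)/(ε*γ0)) = 2*(1+δ)/ε := by
      have h : (1+δ)/(ε*γ0) = (2*(1+δ)/ε)^2 := by rw [hγ0]; field_simp; ring
      rw [h, Real.sqrt_sq (by positivity)]
    rw [hsq]
    set a := γ * (2*(1+δ)/ε) with ha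
    have ha2 : a ≤ 1/2 := by
      rw [ha]
      rw [hγ0] at hγle
      have h := (le_div_iff₀ (by positivity)).mp hγle
      rw [show γ * (2*(1+δ)/ε) = γ*(2*(1+δ))/ε by ring, div_le_iff₀ hε0]
      nlinarith
    have hta : 2*a ≤ γ*k := by
      rw [ha]
      have := mul_le_mul_of_nonneg_left hk hγ.le
      calc 2*(γ*(2*(1+δ)/ε)) = γ*(4*(1+δ)/ε) := by ring
        _ ≤ γ*k := this
    have h0a : 0 ≤ a := by positivity
    have htpos : (0:ℝ) < γ*k+1 := by nlinarith
    have h5 : 1/(γ*k+1) ≤ 1 - a := by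
      rw [div_le_iff₀ htpos]; nlinarith
    linarith
end

section
/- For any constant δ > 0 and any ε := ε_1 p_0 ∈ (0,1], exponential ranking selection with parameter η ≥ 4(1+δ)/ε satisfies: setting γ_0 := ε/(4(1+δ)), for every γ ∈ (0, γ_0], the probability β(γ) of selecting an individual among the ⌈γλ⌉ fittest satisfies β(γ) ≥ ∫_0^γ η e^{η(1−x)}/(e^η − 1) dx = (e^η/(e^η − 1))(1 − e^{−ηγ}) ≥ 1 − 1/(1 + ηγ) ≥ γ √((1+δ)/(ε γ_0)); in particular condition (C4) holds with this γ_0. -/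
lemma exp_ranking_integral (η : ℝ) (hη : 0 < η) (c : ℝ) :
    (∫ x in (0:ℝ)..c, η * Real.exp (η * (1 - x)) / (Real.exp η - 1)) =
      Real.exp η / (Real.exp η - 1) * (1 - Real.exp (-η * c)) := by
  have hK : (0:ℝ) < Real.exp η - 1 := by
    have := Real.add_one_lt_exp (x := η) (by positivity)
    linarith
  have hderiv : ∀ x ∈ Set.uIcc (0:ℝ) c,
      HasDerivAt (fun y => -Real.exp (η * (1 - y)) / (Real.exp η - 1))
        (η * Real.exp (η * (1 - x)) / (Real.exp η - 1)) x := by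
    intro x _
    have h1 : HasDerivAt (fun y : ℝ => η * (1 - y)) (-η) x := by
      simpa using ((hasDerivAt_id x).const_sub 1).const_mul η
    have h2 := (Real.hasDerivAt_exp (η * (1 - x))).comp x h1
    have h3 := (h2.neg).div_const (Real.exp η - 1)
    exact h3.congr_deriv (by ring)
  have hcont : IntervalIntegrable
      (fun x => η * Real.exp (η * (1 - x)) / (Real.exp η - 1))
      MeasureTheory.volume 0 c := by
    apply Continuous.intervalIntegrable
    continuity
  rw [intervalIntegral.integral_eq_sub_of_hasDerivAt hderiv hcont]
  have he : Real.exp (η * (1 - c)) = Real.exp η * Real.exp (-η * c) := by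
    rw [← Real.exp_add]; ring_nf
  rw [he]
  simp only [mul_zero, sub_zero, mul_one]
  field_simp
  ring

/-- **Lemma 1(3)**: exponential ranking selection with ranking function
`α(x) = η e^{η(1−x)}/(e^η − 1)` and parameter `η ≥ 4(1+δ)/ε`, where `δ > 0` and
`ε := ε₁p₀ ∈ (0,1]`, satisfies with `γ₀ := ε/(4(1+δ))`: for every `γ ∈ (0, γ₀]`,
the probability `β(γ) = ∫_0^{⌈γλ⌉/λ} α(x) dx` of selecting an individual among
the `⌈γλ⌉` fittest satisfies
`β(γ) ≥ ∫_0^γ α(x) dx = (e^η/(e^η−1))(1 − e^{−ηγ}) ≥ 1 − 1/(1+ηγ)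
  ≥ γ √((1+δ)/(ε γ₀))`;
in particular condition (C4) holds with this `γ₀`. -/
theorem exp_ranking_selection_satisfies_C4
    (lam : ℕ) (hlam : 0 < lam)
    (δ ε1 p0 ε γ0 η : ℝ)
    (hδ : 0 < δ) (hε : ε = ε1 * p0) (hε0 : 0 < ε) (hεle : ε ≤ 1)
    (hγ0 : γ0 = ε / (4 * (1 + δ)))
    (hη : 4 * (1 + δ) / ε ≤ η) :
    ∀ γ : ℝ, 0 < γ → γ ≤ γ0 →
      (∫ x in (0:ℝ)..γ, η * Real.exp (η * (1 - x)) / (Real.exp η - 1)) ≤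
        (∫ x in (0:ℝ)..((⌈γ * lam⌉₊ : ℝ) / lam),
          η * Real.exp (η * (1 - x)) / (Real.exp η - 1)) ∧
      (∫ x in (0:ℝ)..γ, η * Real.exp (η * (1 - x)) / (Real.exp η - 1)) =
        Real.exp η / (Real.exp η - 1) * (1 - Real.exp (-η * γ)) ∧
      1 - 1 / (1 + η * γ) ≤
        Real.exp η / (Real.exp η - 1) * (1 - Real.exp (-η * γ)) ∧
      γ * Real.sqrt ((1 + δ) / (ε * γ0)) ≤ 1 - 1 / (1 + η * γ) := by
  intro γ hγ hγle
  have hδ1 : (0:ℝ) < 1 + δ := by linarith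
  have hηlb : 4 * (1 + δ) / ε ≥ 4 := by
    rw [ge_iff_le, le_div_iff₀ hε0]
    nlinarith
  have hηpos : 0 < η := by linarith
  have hK : (0:ℝ) < Real.exp η - 1 := by
    have := Real.add_one_lt_exp (x := η) (by positivity)
    linarith
  have hγ0pos : 0 < γ0 := by rw [hγ0]; positivity
  have hint := exp_ranking_integral η hηpos
  -- part 2
  have h2 := hint γ
  -- part 1
  have hle : γ ≤ (⌈γ * lam⌉₊ : ℝ) / lam := by
    rw [le_div_iff₀ (by exact_mod_cast hlam)]
    exact Nat.le_ceil _
  have h1 : (∫ x in (0:ℝ)..γ, η * Real.exp (η * (1 - x)) / (Real.exp η - 1)) ≤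
      (∫ x in (0:ℝ)..((⌈γ * lam⌉₊ : ℝ) / lam),
        η * Real.exp (η * (1 - x)) / (Real.exp η - 1)) := by
    rw [h2, hint]
    have : Real.exp (-η * ((⌈γ * lam⌉₊ : ℝ) / lam)) ≤ Real.exp (-η * γ) := by
      apply Real.exp_le_exp.2
      nlinarith
    have hpos : 0 ≤ Real.exp η / (Real.exp η - 1) := by positivity
    nlinarith
  -- part 3
  have hηγ : 0 < η * γ := by positivity
  have hexple : Real.exp (-η * γ) ≤ 1 / (1 + η * γ) := by
    rw [le_div_iff₀ (by linarith)]
    have h := Real.add_one_le_exp (η * γ)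
    calc Real.exp (-η * γ) * (1 + η * γ) ≤ Real.exp (-η * γ) * Real.exp (η * γ) := by
          apply mul_le_mul_of_nonneg_left (by linarith) (Real.exp_nonneg _)
      _ = 1 := by rw [← Real.exp_add]; ring_nf; exact Real.exp_zero
  have h3 : 1 - 1 / (1 + η * γ) ≤
      Real.exp η / (Real.exp η - 1) * (1 - Real.exp (-η * γ)) := by
    have hfac : 1 ≤ Real.exp η / (Real.exp η - 1) := by
      rw [le_div_iff₀ hK]; linarith
    have hsub : 0 ≤ 1 - Real.exp (-η * γ) := by
      have : Real.exp (-η * γ) ≤ 1 := by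
        rw [Real.exp_le_one_iff]; nlinarith
      linarith
    nlinarith
  -- part 4
  have hs : Real.sqrt ((1 + δ) / (ε * γ0)) = 2 * (1 + δ) / ε := by
    have : (1 + δ) / (ε * γ0) = (2 * (1 + δ) / ε) ^ 2 := by
      rw [hγ0]; field_simp; ring
    rw [this, Real.sqrt_sq (by positivity)]
  have h4 : γ * Real.sqrt ((1 + δ) / (ε * γ0)) ≤ 1 - 1 / (1 + η * γ) := by
    rw [hs]
    have hrhs : 1 - 1 / (1 + η * γ) = η * γ / (1 + η * γ) := by
      field_simp; ring
    rw [hrhs, le_div_iff₀ (by linarith)]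
    -- γ * (2(1+δ)/ε) * (1+ηγ) ≤ ηγ
    have hγε : γ * (4 * (1 + δ)) ≤ ε := by
      rw [← le_div_iff₀ (by positivity)]; exact hγ0 ▸ hγle
    have hsγ : 2 * (1 + δ) / ε * γ ≤ 1 / 2 := by
      rw [div_mul_eq_mul_div, div_le_div_iff₀ hε0 (by norm_num)]
      nlinarith [hγε]
    have hηε : 4 * (1 + δ) ≤ η * ε := by
      rw [div_le_iff₀ hε0] at hη; linarith
    -- goal: γ * (2*(1+δ)/ε) * (1 + η*γ) ≤ η * γ
    have key : 2 * (1 + δ) / ε * (1 + η * γ) ≤ η := by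
      have h1' : 2 * (1 + δ) / ε ≤ η / 2 := by
        rw [div_le_div_iff₀ hε0 (by norm_num)]; nlinarith
      have h2' : 2 * (1 + δ) / ε * (η * γ) ≤ η / 2 := by
        calc 2 * (1 + δ) / ε * (η * γ) = η * (2 * (1 + δ) / ε * γ) := by ring
          _ ≤ η * (1/2) := mul_le_mul_of_nonneg_left hsγ hηpos.le
          _ = η / 2 := by ring
      have hexpand : 2 * (1 + δ) / ε * (1 + η * γ) =
          2 * (1 + δ) / ε + 2 * (1 + δ) / ε * (η * γ) := by ring
      linarith [hexpand.le, hexpand.ge]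
    calc γ * (2 * (1 + δ) / ε) * (1 + η * γ)
        = γ * (2 * (1 + δ) / ε * (1 + η * γ)) := by ring
      _ ≤ γ * η := mul_le_mul_of_nonneg_left key hγ.le
      _ = η * γ := by ring
  exact ⟨h1, h2, h3, h4⟩
end

section
/- Let π be a permutation of [n] with INV(π) = j < m, where m := n(n−1)/2, and let σ be obtained from π by the Exchange mutation operator which draws N from a Poisson distribution with parameter 1 and applies N transpositions of uniformly random pairs of distinct indices. Then Pr(INV(σ) > j) ≥ (m − j)/(e·m), and moreover Pr(INV(σ) ≥ j) ≥ Pr(N = 0) = 1/e. -/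
open scoped ENNReal

/-- `INV(π)`: the number of correctly ordered pairs of the permutation `π`,
i.e. pairs `(i, j)` with `i < j` and `π(i) < π(j)`. -/
def INV {n : ℕ} (π : Equiv.Perm (Fin n)) : ℕ :=
  (Finset.univ.filter fun p : Fin n × Fin n => p.1 < p.2 ∧ π p.1 < π p.2).card

/-- A uniformly random transposition: a pair of distinct indices is selected
uniformly at random and the corresponding entries are exchanged (for `n < 2`,
where no such pair exists, this is the identity). -/
noncomputable def randTrans (n : ℕ) : PMF (Equiv.Perm (Fin n)) :=
  if h : 2 ≤ n then
    haveI : Nonempty {p : Fin n × Fin n // p.1 ≠ p.2} :=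
      ⟨⟨(⟨0, by omega⟩, ⟨1, by omega⟩), by simp [Fin.ext_iff]⟩⟩
    (PMF.uniformOfFintype {p : Fin n × Fin n // p.1 ≠ p.2}).map
      fun p => Equiv.swap p.1.1 p.1.2
  else PMF.pure 1

/-- Consecutively apply `N` uniformly random pairwise exchanges to `π`. -/
noncomputable def exchangeN {n : ℕ} : ℕ → Equiv.Perm (Fin n) → PMF (Equiv.Perm (Fin n))
  | 0, π => PMF.pure π
  | N + 1, π => (randTrans n).bind fun τ => exchangeN N (π * τ)

/-- The `Exchange` mutation operator: draw `N ∼ Poisson(1)` and consecutively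
apply `N` exchanges, each between a uniformly selected pair of distinct
indices. -/
noncomputable def exchangeMut {n : ℕ} (π : Equiv.Perm (Fin n)) :
    PMF (Equiv.Perm (Fin n)) :=
  (ProbabilityTheory.poissonPMF 1).bind fun N => exchangeN N π

-- order helper: in the "else" branch the swapped pair is still increasing in index
lemma swap_order_helper {n : ℕ} (π : Equiv.Perm (Fin n)) (a b i j : Fin n)
    (hab : a < b) (hba : π b < π a) (hij : i < j) (hcorr : π i < π j)
    (hnot : ¬ π (Equiv.swap a b i) < π (Equiv.swap a b j)) :
    Equiv.swap a b i < Equiv.swap a b j := by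
  rcases eq_or_ne i a with rfl | hia
  · rcases eq_or_ne j b with rfl | hjb
    · exact absurd (by simpa using hba) hnot
    · rw [Equiv.swap_apply_left, Equiv.swap_apply_of_ne_of_ne (ne_of_gt hij) hjb] at hnot ⊢
      exact absurd (lt_trans hba hcorr) hnot
  · rcases eq_or_ne i b with rfl | hib
    · -- i = b, j > b so j ≠ a, j ≠ b
      rw [Equiv.swap_apply_right,
        Equiv.swap_apply_of_ne_of_ne (ne_of_gt (lt_trans hab hij)) (ne_of_gt hij)]
      exact lt_trans hab hij
    · rcases eq_or_ne j a with rfl | hja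
      · rw [Equiv.swap_apply_left, Equiv.swap_apply_of_ne_of_ne (ne_of_lt hij) hib]
        exact lt_trans hij hab
      · rcases eq_or_ne j b with rfl | hjb
        · rw [Equiv.swap_apply_right, Equiv.swap_apply_of_ne_of_ne hia hib] at hnot
          exact absurd (lt_trans hcorr hba) hnot
        · rw [Equiv.swap_apply_of_ne_of_ne hia hib,
            Equiv.swap_apply_of_ne_of_ne hja hjb] at hnot
          exact absurd hcorr hnot

lemma inv_lt_inv_swap {n : ℕ} (π : Equiv.Perm (Fin n)) (a b : Fin n)
    (hab : a < b) (hba : π b < π a) : INV π < INV (π * Equiv.swap a b) := by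
  classical
  set σ := π * Equiv.swap a b with hσ
  have hσapp : ∀ x, σ x = π (Equiv.swap a b x) := fun x => rfl
  set A : Finset (Fin n × Fin n) :=
    insert (a, b) (Finset.univ.filter fun p : Fin n × Fin n => p.1 < p.2 ∧ π p.1 < π p.2) with hA
  set B : Finset (Fin n × Fin n) :=
    Finset.univ.filter fun p : Fin n × Fin n => p.1 < p.2 ∧ σ p.1 < σ p.2 with hB
  have hAcard : A.card = INV π + 1 := by
    rw [hA, Finset.card_insert_of_notMem, INV]
    simp only [Finset.mem_filter, Finset.mem_univ, true_and, not_and]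
    exact fun _ => not_lt_of_gt hba
  have hcard : A.card ≤ B.card := by
    apply Finset.card_le_card_of_injOn
      (fun p => if σ p.1 < σ p.2 then p else (Equiv.swap a b p.1, Equiv.swap a b p.2))
    · intro p hp
      rw [Finset.mem_coe, hA, Finset.mem_insert, Finset.mem_filter] at hp
      rcases hp with rfl | ⟨-, h1, h2⟩
      · have : σ a < σ b := by simpa [hσapp] using hba
        simp only [this, if_pos]
        rw [Finset.mem_coe, hB, Finset.mem_filter]
        exact ⟨Finset.mem_univ _, hab, this⟩
      · by_cases hc : σ p.1 < σ p.2
        · simp only [hc, if_pos]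
          rw [Finset.mem_coe, hB, Finset.mem_filter]
          exact ⟨Finset.mem_univ _, h1, hc⟩
        · simp only [hc, if_neg, not_false_iff]
          rw [Finset.mem_coe, hB, Finset.mem_filter]
          refine ⟨Finset.mem_univ _, ?_, ?_⟩
          · exact swap_order_helper π a b p.1 p.2 hab hba h1 h2 (by simpa [hσapp] using hc)
          · simpa [hσapp, Equiv.swap_apply_self] using h2
    · intro p hp q hq hpq
      rw [Finset.mem_coe, hA, Finset.mem_insert, Finset.mem_filter] at hp hq
      simp only at hpq
      by_cases hcp : σ p.1 < σ p.2 <;> by_cases hcq : σ q.1 < σ q.2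
      · simpa [hcp, hcq] using hpq
      · -- p kept, q swapped: p = (swap q.1, swap q.2)
        rw [if_pos hcp, if_neg hcq] at hpq
        exfalso
        have h1 : p.1 = Equiv.swap a b q.1 := by rw [hpq]
        have h2 : p.2 = Equiv.swap a b q.2 := by rw [hpq]
        have hπp : ¬ π p.1 < π p.2 := by
          rw [h1, h2]; simpa [hσapp] using hcq
        rcases hp with rfl | ⟨-, -, h⟩
        · -- p = (a,b), so q = (b, a)
          have hq1 : q.1 = b := by
            have := congrArg (Equiv.swap a b) h1
            simp at this; omega
          have hq2 : q.2 = a := by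
            have := congrArg (Equiv.swap a b) h2
            simp at this; omega
          rcases hq with rfl | ⟨-, h, -⟩
          · exact absurd hq1 (by simp [ne_of_lt hab] : (a,b).1 ≠ b)
          · rw [hq1, hq2] at h; exact absurd h (not_lt_of_gt hab)
        · exact hπp h
      · -- symmetric
        rw [if_neg hcp, if_pos hcq] at hpq
        exfalso
        have h1 : q.1 = Equiv.swap a b p.1 := by rw [← hpq]
        have h2 : q.2 = Equiv.swap a b p.2 := by rw [← hpq]
        have hπq : ¬ π q.1 < π q.2 := by
          rw [h1, h2]; simpa [hσapp] using hcp
        rcases hq with rfl | ⟨-, -, h⟩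
        · have hp1 : p.1 = b := by
            have := congrArg (Equiv.swap a b) h1
            simp at this; omega
          have hp2 : p.2 = a := by
            have := congrArg (Equiv.swap a b) h2
            simp at this; omega
          rcases hp with rfl | ⟨-, h, -⟩
          · exact absurd hp1 (by simp [ne_of_lt hab] : (a,b).1 ≠ b)
          · rw [hp1, hp2] at h; exact absurd h (not_lt_of_gt hab)
        · exact hπq h
      · rw [if_neg hcp, if_neg hcq] at hpq
        have e1 : Equiv.swap a b p.1 = Equiv.swap a b q.1 := congrArg Prod.fst hpq
        have e2 : Equiv.swap a b p.2 = Equiv.swap a b q.2 := congrArg Prod.snd hpq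
        exact Prod.ext ((Equiv.swap a b).injective e1) ((Equiv.swap a b).injective e2)
  have hBinv : INV σ = B.card := rfl
  omega

lemma card_ne_pairs (n : ℕ) :
    (Finset.univ.filter fun p : Fin n × Fin n => p.1 ≠ p.2).card = n * n - n := by
  have : (Finset.univ.filter fun p : Fin n × Fin n => p.1 ≠ p.2) =
      (Finset.univ : Finset (Fin n)).offDiag := by
    ext p; simp [Finset.mem_offDiag]
  rw [this, Finset.offDiag_card, Finset.card_univ, Fintype.card_fin]

lemma card_lt_eq_card_gt (n : ℕ) (P : Fin n → Fin n → Prop) [DecidablePred fun p : Fin n × Fin n => P p.1 p.2]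
    [DecidablePred fun p : Fin n × Fin n => P p.2 p.1] :
    (Finset.univ.filter fun p : Fin n × Fin n => P p.1 p.2).card =
    (Finset.univ.filter fun p : Fin n × Fin n => P p.2 p.1).card := by
  apply Finset.card_bij (fun p _ => p.swap)
  · intro p hp; simp only [Finset.mem_filter, Finset.mem_univ, true_and] at hp ⊢; exact hp
  · intro p _ q _ h; exact Prod.swap_injective h
  · intro p hp
    simp only [Finset.mem_filter, Finset.mem_univ, true_and] at hp
    exact ⟨p.swap, by simpa using hp, by simp⟩

lemma card_lt_pairs (n : ℕ) :
    2 * (Finset.univ.filter fun p : Fin n × Fin n => p.1 < p.2).card = n * n - n := by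
  have hsplit : (Finset.univ.filter fun p : Fin n × Fin n => p.1 < p.2).card +
      (Finset.univ.filter fun p : Fin n × Fin n => p.2 < p.1).card =
      (Finset.univ.filter fun p : Fin n × Fin n => p.1 ≠ p.2).card := by
    rw [← Finset.card_union_of_disjoint]
    · congr 1
      rw [← Finset.filter_or]
      apply Finset.filter_congr
      intro p _
      exact lt_or_lt_iff_ne
    · rw [Finset.disjoint_filter]
      intro p _ h1 h2
      exact absurd h1 (not_lt_of_gt h2)
  have := card_lt_eq_card_gt n (fun a b => a < b)
  rw [card_ne_pairs] at hsplit
  omega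


lemma count_good {n j m : ℕ} (hn2 : 2 ≤ n) (π : Equiv.Perm (Fin n))
    (hπ : INV π = j) (hj : j ≤ m)
    (hL : (Finset.univ.filter fun p : Fin n × Fin n => p.1 < p.2).card = m)
    [D : DecidablePred fun x : {p : Fin n × Fin n // p.1 ≠ p.2} =>
      x ∈ (fun x : {p : Fin n × Fin n // p.1 ≠ p.2} =>
        π * Equiv.swap x.1.1 x.1.2) ⁻¹' {σ | j < INV σ}] :
    2 * (m - j) ≤ (Finset.univ.filter fun x : {p : Fin n × Fin n // p.1 ≠ p.2} =>
      x ∈ (fun x : {p : Fin n × Fin n // p.1 ≠ p.2} =>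
        π * Equiv.swap x.1.1 x.1.2) ⁻¹' {σ | j < INV σ}).card := by
  classical
  set BL : Finset (Fin n × Fin n) :=
    Finset.univ.filter fun p : Fin n × Fin n => p.1 < p.2 ∧ π p.2 < π p.1 with hBL
  set BU : Finset (Fin n × Fin n) :=
    Finset.univ.filter fun p : Fin n × Fin n => p.2 < p.1 ∧ π p.1 < π p.2 with hBU
  have hBLcard : BL.card = m - j := by
    have hsplit := Finset.card_filter_add_card_filter_not
      (s := Finset.univ.filter fun p : Fin n × Fin n => p.1 < p.2)
      (p := fun p : Fin n × Fin n => π p.1 < π p.2)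
    have e1 : ((Finset.univ.filter fun p : Fin n × Fin n => p.1 < p.2).filter
        fun p => π p.1 < π p.2) = Finset.univ.filter
        fun p : Fin n × Fin n => p.1 < p.2 ∧ π p.1 < π p.2 := by
      rw [Finset.filter_filter]
    have e2 : ((Finset.univ.filter fun p : Fin n × Fin n => p.1 < p.2).filter
        fun p => ¬ π p.1 < π p.2) = BL := by
      rw [Finset.filter_filter, hBL]
      apply Finset.filter_congr
      intro p _
      constructor
      · rintro ⟨h1, h2⟩
        refine ⟨h1, lt_of_le_of_ne (not_lt.mp h2) ?_⟩
        intro hEq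
        exact absurd (π.injective hEq) (ne_of_gt h1)
      · rintro ⟨h1, h2⟩
        exact ⟨h1, not_lt_of_gt h2⟩
    rw [e1, e2] at hsplit
    rw [← INV] at hsplit
    rw [hL, hπ] at hsplit
    omega
  have hBUcard : BU.card = BL.card := by
    rw [hBU, hBL]
    exact card_lt_eq_card_gt n (fun a b => b < a ∧ π a < π b)
  have hdisj : Disjoint BL BU := by
    rw [Finset.disjoint_filter]
    rintro p _ ⟨h1, -⟩ ⟨h2, -⟩
    exact absurd h1 (not_lt_of_gt h2)
  have hunion : (BL ∪ BU).card = 2 * (m - j) := by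
    rw [Finset.card_union_of_disjoint hdisj, hBUcard, hBLcard]
    omega
  rw [← hunion]
  have hwit : ((⟨0, by omega⟩ : Fin n), (⟨1, by omega⟩ : Fin n)).1 ≠
      ((⟨0, by omega⟩ : Fin n), (⟨1, by omega⟩ : Fin n)).2 := by
    simp [Fin.ext_iff]
  apply Finset.card_le_card_of_injOn
    (fun p => if h : p.1 ≠ p.2 then (⟨p, h⟩ : {p : Fin n × Fin n // p.1 ≠ p.2})
      else ⟨_, hwit⟩)
  · intro p hp
    rw [Finset.mem_coe, Finset.mem_union, hBL, hBU, Finset.mem_filter, Finset.mem_filter] at hp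
    have hne : p.1 ≠ p.2 := by
      rcases hp with ⟨-, h, -⟩ | ⟨-, h, -⟩
      · exact ne_of_lt h
      · exact ne_of_gt h
    simp only [hne, dif_pos, ne_eq, not_false_eq_true]
    rw [Finset.mem_coe, Finset.mem_filter]
    refine ⟨Finset.mem_univ _, ?_⟩
    rw [Set.mem_preimage, Set.mem_setOf_eq]
    rcases hp with ⟨-, h1, h2⟩ | ⟨-, h1, h2⟩
    · exact hπ ▸ inv_lt_inv_swap π p.1 p.2 h1 h2
    · rw [Equiv.swap_comm]
      exact hπ ▸ inv_lt_inv_swap π p.2 p.1 h1 h2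
  · intro p hp q hq hpq
    rw [Finset.mem_coe, Finset.mem_union, hBL, hBU, Finset.mem_filter, Finset.mem_filter] at hp hq
    have hnep : p.1 ≠ p.2 := by
      rcases hp with ⟨-, h, -⟩ | ⟨-, h, -⟩
      · exact ne_of_lt h
      · exact ne_of_gt h
    have hneq : q.1 ≠ q.2 := by
      rcases hq with ⟨-, h, -⟩ | ⟨-, h, -⟩
      · exact ne_of_lt h
      · exact ne_of_gt h
    simp only [hnep, hneq, dif_pos, ne_eq, not_false_eq_true] at hpq
    exact congrArg Subtype.val hpq

lemma poissonPMF_one_apply (k : ℕ) :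
    ProbabilityTheory.poissonPMF 1 k = ENNReal.ofReal (Real.exp (-1) / k.factorial) := by
  have h : ProbabilityTheory.poissonPMF 1 k
      = ENNReal.ofReal (ProbabilityTheory.poissonPMFReal 1 k) := rfl
  rw [h, ProbabilityTheory.poissonPMFReal]
  norm_num


/-- If `INV(π) = j < m := n(n−1)/2` and `σ` is obtained from `π` by the
`Exchange` mutation operator, then `Pr(INV(σ) > j) ≥ (m − j)/(e·m)`, and
moreover `Pr(INV(σ) ≥ j) ≥ Pr(N = 0) = 1/e`. -/
theorem exchange_mutation_inv_improvement
    (n j m : ℕ) (hm : m = n * (n - 1) / 2)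
    (π : Equiv.Perm (Fin n)) (hπ : INV π = j) (hj : j < m) :
    ENNReal.ofReal (((m : ℝ) - j) / (Real.exp 1 * m)) ≤
      (exchangeMut π).toOuterMeasure {σ | j < INV σ} ∧
    (ProbabilityTheory.poissonPMF 1) 0 ≤
      (exchangeMut π).toOuterMeasure {σ | j ≤ INV σ} ∧
    (ProbabilityTheory.poissonPMF 1) 0 = ENNReal.ofReal (1 / Real.exp 1) := by
  classical
  have hm0 : 0 < m := Nat.pos_of_ne_zero (by omega)
  have hn2 : 2 ≤ n := by
    by_contra h
    interval_cases n <;> simp_all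
  -- 2 * m = n * n - n
  have h2m : 2 * m = n * n - n := by
    obtain ⟨c, hc⟩ : Even ((n - 1) * (n - 1 + 1)) := Nat.even_mul_succ_self (n - 1)
    have hnn : n * (n - 1) = (n - 1) * (n - 1 + 1) := by
      have : n - 1 + 1 = n := by omega
      rw [this, Nat.mul_comm]
    have hnn2 : n * (n - 1) = n * n - n := by
      rw [← Nat.pred_eq_sub_one, Nat.mul_pred]
    omega
  refine ⟨?_, ?_, ?_⟩
  · -- main part
    have hL : (Finset.univ.filter fun p : Fin n × Fin n => p.1 < p.2).card = m := by
      have := card_lt_pairs n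
      omega
    rw [exchangeMut, PMF.toOuterMeasure_bind_apply]
    refine le_trans ?_ (ENNReal.le_tsum 1)
    haveI instNE : Nonempty {p : Fin n × Fin n // p.1 ≠ p.2} :=
      ⟨⟨(⟨0, by omega⟩, ⟨1, by omega⟩), by simp [Fin.ext_iff]⟩⟩
    have h0 : ∀ ρ : Equiv.Perm (Fin n), exchangeN 0 ρ = PMF.pure ρ := fun _ => by
      simp [exchangeN]
    have hE1 : exchangeN 1 π =
        PMF.map (fun x : {p : Fin n × Fin n // p.1 ≠ p.2} =>
          π * Equiv.swap x.1.1 x.1.2) (PMF.uniformOfFintype _) := by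
      show (randTrans n).bind (fun τ => exchangeN 0 (π * τ)) = _
      simp only [h0]
      rw [randTrans, dif_pos hn2, PMF.bind_map]
      rfl
    rw [hE1, PMF.toOuterMeasure_map_apply, PMF.uniformOfFintype,
      PMF.toOuterMeasure_uniformOfFinset_apply]
    have hcard : (Finset.univ : Finset {p : Fin n × Fin n // p.1 ≠ p.2}).card = 2 * m := by
      rw [Finset.card_univ, Fintype.card_subtype]
      rw [card_ne_pairs]
      omega
    have hC := count_good hn2 π hπ hj.le hL
    rw [hcard]
    calc ENNReal.ofReal (((m : ℝ) - j) / (Real.exp 1 * m))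
        = ENNReal.ofReal (Real.exp (-1) / Nat.factorial 1) *
            ((2 * (m - j) : ℕ) / ((2 * m : ℕ) : ℝ≥0∞)) := by
          rw [← ENNReal.ofReal_natCast (2 * (m - j)), ← ENNReal.ofReal_natCast (2 * m),
            ← ENNReal.ofReal_div_of_pos (by positivity),
            ← ENNReal.ofReal_mul (by positivity)]
          congr 1
          have hcast : ((m - j : ℕ) : ℝ) = (m : ℝ) - j := by
            rw [Nat.cast_sub hj.le]
          push_cast [hcast]
          rw [Real.exp_neg]
          have hm0' : (0 : ℝ) < m := by exact_mod_cast hm0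
          have he : (0 : ℝ) < Real.exp 1 := Real.exp_pos 1
          field_simp
          ring
      _ ≤ ENNReal.ofReal (Real.exp (-1) / Nat.factorial 1) *
            (((Finset.univ.filter fun x : {p : Fin n × Fin n // p.1 ≠ p.2} =>
              x ∈ (fun x : {p : Fin n × Fin n // p.1 ≠ p.2} =>
                π * Equiv.swap x.1.1 x.1.2) ⁻¹' {σ | j < INV σ}).card : ℝ≥0∞) /
              ((2 * m : ℕ) : ℝ≥0∞)) := by
          gcongr
      _ ≤ _ := by
          rw [poissonPMF_one_apply]
  · -- second part
    rw [exchangeMut, PMF.toOuterMeasure_bind_apply]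
    refine le_trans ?_ (ENNReal.le_tsum 0)
    have h0 : (exchangeN 0 π).toOuterMeasure {σ | j ≤ INV σ} = 1 := by
      show (PMF.pure π).toOuterMeasure {σ | j ≤ INV σ} = 1
      rw [PMF.toOuterMeasure_pure_apply, if_pos]
      exact le_of_eq hπ.symm
    rw [h0, mul_one]
  · rw [poissonPMF_one_apply]
    simp [Real.exp_neg]
end
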